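/- Let S be a finite set of at least two points in a metric space, let T be a minimum spanning tree of S, and let h be a maximum-weight edge of T. Then for every partition of S into two nonempty sets R and B, one has mstCost(R) + mstCost(B) ≥ mstCost(S) − w(h), where w(h) is the length of the edge h. -/

import Mathlib

variable {α : Type*} [MetricSpace α] [DecidableEq α]

/-- Two points are connected via the edge set `E` (edges usable in both directions). -/
def EdgeConn (E : Finset (α × α)) (x y : α) : Prop :=
  Relation.ReflTransGen (fun a b => (a, b) ∈ E ∨ (b, a) ∈ E) x y

/-- `E` is (the edge set of) a spanning tree of the complete graph on the finite
point set `X`: its edges join points of `X`, it has `|X| - 1` edges, and it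
connects every two points of `X`. -/
def IsSpanningTreeOn (X : Finset α) (E : Finset (α × α)) : Prop :=
  (∀ e ∈ E, e.1 ∈ X ∧ e.2 ∈ X) ∧ E.card + 1 = X.card ∧
    ∀ x ∈ X, ∀ y ∈ X, EdgeConn E x y

/-- The minimum total edge length of a spanning tree on `X`. -/
noncomputable def mstCost (X : Finset α) : ℝ :=
  sInf {c | ∃ E : Finset (α × α), IsSpanningTreeOn X E ∧ c = ∑ e ∈ E, dist e.1 e.2}

lemma edgeConn_mono {E E' : Finset (α × α)} (hEE : E ⊆ E') {x y : α}
    (h : EdgeConn E x y) : EdgeConn E' x y :=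
  Relation.ReflTransGen.mono (fun a b (hab : (a, b) ∈ E ∨ (b, a) ∈ E) => hab.imp (fun h => hEE h) (fun h => hEE h)) x y h

lemma edgeConn_symm {E : Finset (α × α)} {x y : α} (h : EdgeConn E x y) : EdgeConn E y x := by
  have : Symmetric (fun a b : α => (a, b) ∈ E ∨ (b, a) ∈ E) := fun a b hab => hab.symm
  exact (@Relation.ReflTransGen.stdSymm _ _ ⟨this⟩).symm _ _ h

lemma exists_spanning_tree (X : Finset α) (hX : X.Nonempty) :
    ∃ E : Finset (α × α), IsSpanningTreeOn X E := by
  obtain ⟨r, hr⟩ := hX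
  refine ⟨(X.erase r).image (fun x => (r, x)), ?_, ?_, ?_⟩
  · intro e he
    obtain ⟨x, hx, rfl⟩ := Finset.mem_image.mp he
    exact ⟨hr, Finset.mem_of_mem_erase hx⟩
  · rw [Finset.card_image_of_injective _ (fun a b hab => by simpa using hab)]
    exact Finset.card_erase_add_one hr
  · have key : ∀ x ∈ X, EdgeConn ((X.erase r).image (fun x => (r, x))) x r := by
      intro x hx
      by_cases hxr : x = r
      · subst hxr; exact Relation.ReflTransGen.refl
      · exact Relation.ReflTransGen.single
          (Or.inr (Finset.mem_image.mpr ⟨x, Finset.mem_erase.mpr ⟨hxr, hx⟩, rfl⟩))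
    intro x hx y hy
    exact (key x hx).trans (edgeConn_symm (key y hy))

lemma exists_crossing (T : Finset (α × α)) (R B : Finset α) (hdisj : Disjoint R B)
    (hTS : ∀ e ∈ T, e.1 ∈ R ∪ B ∧ e.2 ∈ R ∪ B)
    {x y : α} (hx : x ∈ R) (hconn : EdgeConn T x y) (hy : y ∈ B) :
    ∃ e ∈ T, (e.1 ∈ R ∧ e.2 ∈ B) ∨ (e.1 ∈ B ∧ e.2 ∈ R) := by
  revert hy
  induction hconn with
  | refl => intro hy; exact absurd hy (Finset.disjoint_left.mp hdisj hx)
  | @tail b c hxb hbc ih =>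
    intro hy
    have hbRB : b ∈ R ∪ B := by
      rcases hbc with h1 | h1
      · exact (hTS _ h1).1
      · exact (hTS _ h1).2
    rcases Finset.mem_union.mp hbRB with hbR | hbB
    · rcases hbc with h1 | h1
      · exact ⟨_, h1, Or.inl ⟨hbR, hy⟩⟩
      · exact ⟨_, h1, Or.inr ⟨hy, hbR⟩⟩
    · exact ih hbB

lemma key_bound (S : Finset α)
    (T : Finset (α × α)) (hT : IsSpanningTreeOn S T)
    (h : α × α) (hmax : ∀ e ∈ T, dist e.1 e.2 ≤ dist h.1 h.2)
    (R B : Finset α) (hRB : R ∪ B = S) (hdisj : Disjoint R B)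
    (hRne : R.Nonempty) (hBne : B.Nonempty)
    (ER EB : Finset (α × α)) (hER : IsSpanningTreeOn R ER) (hEB : IsSpanningTreeOn B EB) :
    mstCost S ≤ (∑ e ∈ ER, dist e.1 e.2) + (∑ e ∈ EB, dist e.1 e.2) + dist h.1 h.2 := by
  obtain ⟨r, hr⟩ := hRne
  obtain ⟨b, hb⟩ := hBne
  have hrS : r ∈ S := hRB ▸ Finset.mem_union_left _ hr
  have hbS : b ∈ S := hRB ▸ Finset.mem_union_right _ hb
  have hTS : ∀ e ∈ T, e.1 ∈ R ∪ B ∧ e.2 ∈ R ∪ B := by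
    intro e he; rw [hRB]; exact hT.1 e he
  obtain ⟨f, hfT, hfcross⟩ :=
    exists_crossing T R B hdisj hTS hr (hT.2.2 r hrS b hbS) hb
  -- rpt ∈ R, bpt ∈ B are the endpoints of f
  set E : Finset (α × α) := insert f (ER ∪ EB) with hE
  have hfR : f.1 ∈ R ∧ f.2 ∈ B ∨ f.1 ∈ B ∧ f.2 ∈ R := hfcross
  have hERsub : ∀ e ∈ ER, e.1 ∈ R ∧ e.2 ∈ R := hER.1
  have hEBsub : ∀ e ∈ EB, e.1 ∈ B ∧ e.2 ∈ B := hEB.1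
  have hdisjE : Disjoint ER EB := by
    rw [Finset.disjoint_left]
    intro e he1 he2
    exact Finset.disjoint_left.mp hdisj (hERsub e he1).1 (hEBsub e he2).1
  have hfnot : f ∉ ER ∪ EB := by
    intro hf
    rcases Finset.mem_union.mp hf with hf1 | hf1
    · rcases hfR with ⟨_, h2⟩ | ⟨h1, _⟩
      · exact Finset.disjoint_left.mp hdisj (hERsub f hf1).2 h2
      · exact Finset.disjoint_left.mp hdisj (hERsub f hf1).1 h1
    · rcases hfR with ⟨h1, _⟩ | ⟨_, h2⟩
      · exact Finset.disjoint_left.mp hdisj h1 (hEBsub f hf1).1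
      · exact Finset.disjoint_left.mp hdisj h2 (hEBsub f hf1).2
  have hSTE : IsSpanningTreeOn S E := by
    refine ⟨?_, ?_, ?_⟩
    · intro e he
      rcases Finset.mem_insert.mp he with rfl | he'
      · rcases hfR with ⟨h1, h2⟩ | ⟨h1, h2⟩
        · exact ⟨hRB ▸ Finset.mem_union_left _ h1, hRB ▸ Finset.mem_union_right _ h2⟩
        · exact ⟨hRB ▸ Finset.mem_union_right _ h1, hRB ▸ Finset.mem_union_left _ h2⟩
      · rcases Finset.mem_union.mp he' with h1 | h1
        · exact ⟨hRB ▸ Finset.mem_union_left _ (hERsub e h1).1,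
            hRB ▸ Finset.mem_union_left _ (hERsub e h1).2⟩
        · exact ⟨hRB ▸ Finset.mem_union_right _ (hEBsub e h1).1,
            hRB ▸ Finset.mem_union_right _ (hEBsub e h1).2⟩
    · rw [hE, Finset.card_insert_of_notMem hfnot, Finset.card_union_of_disjoint hdisjE,
        ← hRB, Finset.card_union_of_disjoint hdisj, ← hER.2.1, ← hEB.2.1]
      ring
    · -- connectivity
      have hsubR : ER ⊆ E := fun e he => Finset.mem_insert_of_mem (Finset.mem_union_left _ he)
      have hsubB : EB ⊆ E := fun e he => Finset.mem_insert_of_mem (Finset.mem_union_right _ he)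
      have hstep : EdgeConn E f.1 f.2 :=
        Relation.ReflTransGen.single (Or.inl (Finset.mem_insert_self f _))
      have connR : ∀ x ∈ R, ∀ y ∈ R, EdgeConn E x y :=
        fun x hx y hy => edgeConn_mono hsubR (hER.2.2 x hx y hy)
      have connB : ∀ x ∈ B, ∀ y ∈ B, EdgeConn E x y :=
        fun x hx y hy => edgeConn_mono hsubB (hEB.2.2 x hx y hy)
      have connRB : ∀ x ∈ R, ∀ y ∈ B, EdgeConn E x y := by
        intro x hx y hy
        rcases hfR with ⟨h1, h2⟩ | ⟨h1, h2⟩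
        · exact ((connR x hx f.1 h1).trans hstep).trans (connB f.2 h2 y hy)
        · exact ((connR x hx f.2 h2).trans (edgeConn_symm hstep)).trans (connB f.1 h1 y hy)
      intro x hx y hy
      rw [← hRB] at hx hy
      rcases Finset.mem_union.mp hx with hx1 | hx1 <;>
        rcases Finset.mem_union.mp hy with hy1 | hy1
      · exact connR x hx1 y hy1
      · exact connRB x hx1 y hy1
      · exact edgeConn_symm (connRB y hy1 x hx1)
      · exact connB x hx1 y hy1
  have hcost : (∑ e ∈ E, dist e.1 e.2)
      = dist f.1 f.2 + ((∑ e ∈ ER, dist e.1 e.2) + (∑ e ∈ EB, dist e.1 e.2)) := by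
    rw [hE, Finset.sum_insert hfnot, Finset.sum_union hdisjE]
  have hbdd : BddBelow {c | ∃ E : Finset (α × α),
      IsSpanningTreeOn S E ∧ c = ∑ e ∈ E, dist e.1 e.2} := by
    refine ⟨0, fun c hc => ?_⟩
    obtain ⟨E', _, rfl⟩ := hc
    exact Finset.sum_nonneg fun e _ => dist_nonneg
  have hmem : (∑ e ∈ E, dist e.1 e.2) ∈ {c | ∃ E : Finset (α × α),
      IsSpanningTreeOn S E ∧ c = ∑ e ∈ E, dist e.1 e.2} := ⟨E, hSTE, rfl⟩
  calc mstCost S ≤ ∑ e ∈ E, dist e.1 e.2 := csInf_le hbdd hmem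
    _ = dist f.1 f.2 + ((∑ e ∈ ER, dist e.1 e.2) + (∑ e ∈ EB, dist e.1 e.2)) := hcost
    _ ≤ dist h.1 h.2 + ((∑ e ∈ ER, dist e.1 e.2) + (∑ e ∈ EB, dist e.1 e.2)) := by
        linarith [hmax f hfT]
    _ = (∑ e ∈ ER, dist e.1 e.2) + (∑ e ∈ EB, dist e.1 e.2) + dist h.1 h.2 := by ring

/-- If `T` is a minimum spanning tree of `S` and `h` is a maximum-weight
edge of `T`, then for every partition of `S` into two nonempty sets `R` and `B`,
`mstCost R + mstCost B ≥ mstCost S - dist h.1 h.2`. -/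
theorem mst_partition_lower_bound
    (S : Finset α) (hS : 2 ≤ S.card)
    (T : Finset (α × α)) (hT : IsSpanningTreeOn S T)
    (hTmin : (∑ e ∈ T, dist e.1 e.2) = mstCost S)
    (h : α × α) (hh : h ∈ T) (hmax : ∀ e ∈ T, dist e.1 e.2 ≤ dist h.1 h.2)
    (R B : Finset α) (hRB : R ∪ B = S) (hdisj : Disjoint R B)
    (hRne : R.Nonempty) (hBne : B.Nonempty) :
    mstCost S - dist h.1 h.2 ≤ mstCost R + mstCost B := by
  set AR := {c | ∃ E : Finset (α × α), IsSpanningTreeOn R E ∧ c = ∑ e ∈ E, dist e.1 e.2}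
    with hAR
  set AB := {c | ∃ E : Finset (α × α), IsSpanningTreeOn B E ∧ c = ∑ e ∈ E, dist e.1 e.2}
    with hAB
  have hARne : AR.Nonempty := by
    obtain ⟨E, hE⟩ := exists_spanning_tree R hRne
    exact ⟨_, E, hE, rfl⟩
  have hABne : AB.Nonempty := by
    obtain ⟨E, hE⟩ := exists_spanning_tree B hBne
    exact ⟨_, E, hE, rfl⟩
  have key : ∀ a ∈ AR, ∀ b ∈ AB, mstCost S ≤ a + b + dist h.1 h.2 := by
    rintro a ⟨ER, hER, rfl⟩ b ⟨EB, hEB, rfl⟩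
    exact key_bound S T hT h hmax R B hRB hdisj hRne hBne ER EB hER hEB
  have step1 : ∀ b ∈ AB, mstCost S - dist h.1 h.2 - b ≤ mstCost R := by
    intro b hb
    refine le_csInf hARne fun a ha => ?_
    linarith [key a ha b hb]
  have step2 : mstCost S - dist h.1 h.2 - mstCost R ≤ mstCost B := by
    refine le_csInf hABne fun b hb => ?_
    linarith [step1 b hb]
  linarith
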